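/- Let $A$ be an invertible bounded operator on a Hilbert space with $g = \|A^{-1}\|^{-1}$, and let $D$ be self-adjoint with $[D,A]$ bounded. For $\kappa > 0$ define $L_\kappa = \begin{pmatrix} \kappa D & A \\ A^* & -\kappa D \end{pmatrix}$. Then $L_\kappa^2 = \begin{pmatrix} \kappa^2 D^2 + AA^* & \kappa [D,A] \\ \kappa [D,A]^* & \kappa^2 D^2 + A^*A \end{pmatrix}$, and consequently $L_\kappa^2 \ge (g^2 - \kappa \|[D,A]\|)\, \mathbf{1}$. -/

import Mathlib

open Matrix
open scoped Matrix.Norms.L2Operator ComplexOrder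

section Aux

variable {m : Type*} [Fintype m] [DecidableEq m]

/-- Euclidean norm of a plain vector. -/
private noncomputable def vnorm (x : m → ℂ) : ℝ := ‖(WithLp.equiv 2 (m → ℂ)).symm x‖

private lemma vnorm_nonneg (x : m → ℂ) : 0 ≤ vnorm x := norm_nonneg _

private lemma dotProduct_star_self_eq (x : m → ℂ) :
    star x ⬝ᵥ x = ((vnorm x ^ 2 : ℝ) : ℂ) := by
  have h := inner_self_eq_norm_sq_to_K (𝕜 := ℂ) ((WithLp.equiv 2 (m → ℂ)).symm x)
  rw [EuclideanSpace.inner_eq_star_dotProduct, dotProduct_comm] at h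
  rw [show ((vnorm x ^ 2 : ℝ) : ℂ) = ((vnorm x : ℝ) : ℂ) ^ 2 by push_cast; ring]
  simpa [vnorm] using h

private lemma abs_dotProduct_le (x y : m → ℂ) :
    ‖star x ⬝ᵥ y‖ ≤ vnorm x * vnorm y := by
  have h := norm_inner_le_norm (𝕜 := ℂ) ((WithLp.equiv 2 (m → ℂ)).symm x)
    ((WithLp.equiv 2 (m → ℂ)).symm y)
  rw [EuclideanSpace.inner_eq_star_dotProduct, dotProduct_comm] at h
  simpa [vnorm] using h

private lemma vnorm_mulVec_le (B : Matrix m m ℂ) (y : m → ℂ) :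
    vnorm (B *ᵥ y) ≤ ‖B‖ * vnorm y := by
  have h := Matrix.l2_opNorm_mulVec B ((WithLp.equiv 2 (m → ℂ)).symm y)
  simpa [vnorm] using h

/-- A Hermitian matrix with nonnegative real quadratic form is PSD. -/
private lemma posSemidef_of_re {M : Matrix m m ℂ} (h : M.IsHermitian)
    (hr : ∀ x : m → ℂ, 0 ≤ (star x ⬝ᵥ M *ᵥ x).re) : M.PosSemidef := by
  refine .of_dotProduct_mulVec_nonneg h fun x => ?_
  have hsa : star x ⬝ᵥ M *ᵥ x = star (star x ⬝ᵥ M *ᵥ x) := by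
    conv_lhs => rw [star_dotProduct, star_mulVec, h.eq, ← dotProduct_mulVec]
  rw [Complex.le_def]
  have him : (star x ⬝ᵥ M *ᵥ x).im = 0 := by
    have := congrArg Complex.im hsa
    simp only [Complex.star_def, Complex.conj_im] at this
    linarith
  exact ⟨by simpa using hr x, by simpa using him.symm⟩

/-- Block-diagonal of two PSDs is PSD. -/
private lemma posSemidef_fromBlocks_diag {A B : Matrix m m ℂ}
    (hA : A.PosSemidef) (hB : B.PosSemidef) :
    (Matrix.fromBlocks A 0 0 B).PosSemidef := by
  refine .of_dotProduct_mulVec_nonneg ?_ fun x => ?_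
  · rw [Matrix.isHermitian_fromBlocks_iff]
    refine ⟨hA.1, by simp, by simp, hB.1⟩
  · have hx : x = Sum.elim (x ∘ Sum.inl) (x ∘ Sum.inr) := (Sum.elim_comp_inl_inr x).symm
    rw [hx, Function.star_sumElim, Matrix.fromBlocks_mulVec]
    simp only [Matrix.zero_mulVec, add_zero, zero_add]
    rw [sumElim_dotProduct_sumElim]
    exact add_nonneg (hA.dotProduct_mulVec_nonneg _) (hB.dotProduct_mulVec_nonneg _)

/-- The "corner" matrix `[[t•1, B],[Bᴴ, t•1]]` with `t ≥ ‖B‖` is PSD. -/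
private lemma posSemidef_corner (B : Matrix m m ℂ) {t : ℝ} (ht : ‖B‖ ≤ t) :
    (Matrix.fromBlocks ((t : ℂ) • 1) B Bᴴ ((t : ℂ) • 1)).PosSemidef := by
  have ht0 : (0:ℝ) ≤ t := le_trans (norm_nonneg _) ht
  have hherm : (Matrix.fromBlocks ((t : ℂ) • 1) B Bᴴ ((t : ℂ) • 1)).IsHermitian := by
    rw [Matrix.isHermitian_fromBlocks_iff]
    refine ⟨?_, rfl, by simp, ?_⟩ <;>
      simp [Matrix.IsHermitian, Matrix.conjTranspose_smul, Complex.star_def,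
        Complex.conj_ofReal]
  refine posSemidef_of_re hherm fun v => ?_
  set x := v ∘ Sum.inl with hxdef
  set y := v ∘ Sum.inr with hydef
  have hv : v = Sum.elim x y := (Sum.elim_comp_inl_inr v).symm
  rw [hv, Function.star_sumElim, Matrix.fromBlocks_mulVec,
    sumElim_dotProduct_sumElim]
  have h1 : star x ⬝ᵥ (((t : ℂ) • 1) *ᵥ x) = (t : ℂ) * (star x ⬝ᵥ x) := by
    simp [Matrix.smul_mulVec, Matrix.one_mulVec, dotProduct_smul, smul_eq_mul]
  have h2 : star y ⬝ᵥ (((t : ℂ) • 1) *ᵥ y) = (t : ℂ) * (star y ⬝ᵥ y) := by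
    simp [Matrix.smul_mulVec, Matrix.one_mulVec, dotProduct_smul, smul_eq_mul]
  have hconj : star y ⬝ᵥ (Bᴴ *ᵥ x) = star (star x ⬝ᵥ (B *ᵥ y)) := by
    conv_lhs => rw [star_dotProduct, star_mulVec, Matrix.conjTranspose_conjTranspose,
      ← dotProduct_mulVec]
  simp only [Sum.elim_comp_inl, Sum.elim_comp_inr]
  rw [dotProduct_add, dotProduct_add, h1, h2, hconj, dotProduct_star_self_eq,
    dotProduct_star_self_eq]
  have hcs : |(star x ⬝ᵥ (B *ᵥ y)).re| ≤ t * (vnorm x * vnorm y) := by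
    calc |(star x ⬝ᵥ (B *ᵥ y)).re| ≤ ‖star x ⬝ᵥ (B *ᵥ y)‖ :=
          Complex.abs_re_le_norm _
      _ ≤ vnorm x * vnorm (B *ᵥ y) := abs_dotProduct_le _ _
      _ ≤ vnorm x * (‖B‖ * vnorm y) :=
          mul_le_mul_of_nonneg_left (vnorm_mulVec_le B y) (vnorm_nonneg x)
      _ ≤ vnorm x * (t * vnorm y) :=
          mul_le_mul_of_nonneg_left
            (mul_le_mul_of_nonneg_right ht (vnorm_nonneg y)) (vnorm_nonneg x)
      _ = t * (vnorm x * vnorm y) := by ring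
  simp only [Complex.add_re, Complex.mul_re, Complex.ofReal_re, Complex.ofReal_im,
    Complex.star_def, Complex.conj_re, zero_mul, sub_zero]
  nlinarith [sq_nonneg (vnorm x - vnorm y), neg_abs_le ((star x ⬝ᵥ (B *ᵥ y)).re),
    vnorm_nonneg x, vnorm_nonneg y]

/-- The invertibility gap: `A Aᴴ ≥ ‖A⁻¹‖⁻² • 1`. -/
private lemma posSemidef_gap (A : Matrix m m ℂ) (hA : IsUnit A) :
    (A * Aᴴ - (((‖A⁻¹‖⁻¹ : ℝ) ^ 2 : ℝ) : ℂ) • 1).PosSemidef := by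
  set g : ℝ := ‖A⁻¹‖⁻¹ with hgdef
  have hg0 : 0 ≤ g := by positivity
  have hherm : (A * Aᴴ - ((g ^ 2 : ℝ) : ℂ) • 1).IsHermitian := by
    apply Matrix.IsHermitian.sub (Matrix.isHermitian_mul_conjTranspose_self A)
    simp [Matrix.IsHermitian, Matrix.conjTranspose_smul, Complex.star_def,
      Complex.conj_ofReal]
  refine posSemidef_of_re hherm fun x => ?_
  have hmain : star x ⬝ᵥ ((A * Aᴴ - ((g ^ 2 : ℝ) : ℂ) • 1) *ᵥ x)
      = star (Aᴴ *ᵥ x) ⬝ᵥ (Aᴴ *ᵥ x) - ((g ^ 2 : ℝ) : ℂ) * (star x ⬝ᵥ x) := by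
    rw [Matrix.sub_mulVec, dotProduct_sub]
    congr 1
    · rw [← Matrix.mulVec_mulVec, star_mulVec, Matrix.conjTranspose_conjTranspose,
        dotProduct_mulVec]
    · simp [Matrix.smul_mulVec, Matrix.one_mulVec, dotProduct_smul, smul_eq_mul]
  rw [hmain, dotProduct_star_self_eq, dotProduct_star_self_eq]
  -- now a real inequality: vnorm (Aᴴ *ᵥ x) ^ 2 - g^2 * vnorm x ^ 2 ≥ 0
  have hkey : g * vnorm x ≤ vnorm (Aᴴ *ᵥ x) := by
    have hx : x = (Aᴴ)⁻¹ *ᵥ (Aᴴ *ᵥ x) := by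
      rw [Matrix.mulVec_mulVec, Matrix.nonsing_inv_mul _ (by
        simpa [Matrix.isUnit_iff_isUnit_det, Matrix.det_conjTranspose] using
          (Matrix.isUnit_iff_isUnit_det A).mp hA |>.star), Matrix.one_mulVec]
    have h1 : vnorm x ≤ ‖(Aᴴ)⁻¹‖ * vnorm (Aᴴ *ᵥ x) := by
      conv_lhs => rw [hx]
      exact vnorm_mulVec_le _ _
    have h2 : ‖(Aᴴ)⁻¹‖ = ‖A⁻¹‖ := by
      rw [← Matrix.conjTranspose_nonsing_inv, Matrix.l2_opNorm_conjTranspose]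
    rw [h2] at h1
    have h3 : g * vnorm x ≤ g * (‖A⁻¹‖ * vnorm (Aᴴ *ᵥ x)) :=
      mul_le_mul_of_nonneg_left h1 hg0
    have h4 : g * ‖A⁻¹‖ ≤ 1 := by
      rw [hgdef]
      rcases eq_or_ne ‖A⁻¹‖ 0 with h | h
      · simp [h]
      · rw [inv_mul_cancel₀ h]
    calc g * vnorm x ≤ g * ‖A⁻¹‖ * vnorm (Aᴴ *ᵥ x) := by linarith [h3]
      _ ≤ 1 * vnorm (Aᴴ *ᵥ x) :=
          mul_le_mul_of_nonneg_right h4 (vnorm_nonneg _)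
      _ = vnorm (Aᴴ *ᵥ x) := one_mul _
  have hsq : g ^ 2 * vnorm x ^ 2 ≤ vnorm (Aᴴ *ᵥ x) ^ 2 := by
    nlinarith [vnorm_nonneg x, vnorm_nonneg (Aᴴ *ᵥ x), mul_nonneg hg0 (vnorm_nonneg x)]
  simp only [Complex.sub_re, Complex.mul_re, Complex.ofReal_re, Complex.ofReal_im,
    zero_mul, sub_zero]
  linarith [hsq]

end Aux

/-- Let `A` be an invertible matrix with `g = ‖A⁻¹‖⁻¹` and `D` Hermitian, and for
`κ > 0` let `L = [[κD, A], [A^*, -κD]]` be the spectral localizer.  Then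
`L² = [[κ²D² + AA^*, κ[D,A]], [κ[D,A]^*, κ²D² + A^*A]]` and consequently
`L² ≥ (g² - κ‖[D,A]‖) 1`. -/
theorem spectral_localizer_square {n : ℕ} (D A : Matrix (Fin n) (Fin n) ℂ)
    (hD : D.IsHermitian) (hA : IsUnit A)
    (g : ℝ) (hg : g = ‖A⁻¹‖⁻¹) (κ : ℝ) (hκ : 0 < κ)
    (L : Matrix (Fin n ⊕ Fin n) (Fin n ⊕ Fin n) ℂ)
    (hL : L = Matrix.fromBlocks ((κ : ℂ) • D) A Aᴴ (-((κ : ℂ) • D))) :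
    L ^ 2 = Matrix.fromBlocks
        (((κ : ℂ)) ^ 2 • (D * D) + A * Aᴴ) ((κ : ℂ) • (D * A - A * D))
        ((κ : ℂ) • (D * A - A * D)ᴴ) (((κ : ℂ)) ^ 2 • (D * D) + Aᴴ * A) ∧
      (L ^ 2 - (((g ^ 2 - κ * ‖D * A - A * D‖ : ℝ) : ℂ)) • 1).PosSemidef := by
  have hsq : L ^ 2 = Matrix.fromBlocks
      (((κ : ℂ)) ^ 2 • (D * D) + A * Aᴴ) ((κ : ℂ) • (D * A - A * D))
      ((κ : ℂ) • (D * A - A * D)ᴴ) (((κ : ℂ)) ^ 2 • (D * D) + Aᴴ * A) := by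
    rw [hL, pow_two, Matrix.fromBlocks_multiply]
    rw [Matrix.fromBlocks_inj]
    refine ⟨?_, ?_, ?_, ?_⟩ <;>
      simp only [Matrix.conjTranspose_sub, Matrix.conjTranspose_mul, hD.eq,
        Matrix.neg_mul, Matrix.mul_neg, smul_mul_assoc, mul_smul_comm] <;>
      module
  refine ⟨hsq, ?_⟩
  set C : Matrix (Fin n) (Fin n) ℂ := D * A - A * D with hC
  -- decompose into three PSD pieces
  have hdecomp : L ^ 2 - (((g ^ 2 - κ * ‖C‖ : ℝ) : ℂ)) • 1 =
      Matrix.fromBlocks ((κ : ℂ) ^ 2 • (D * D)) 0 0 ((κ : ℂ) ^ 2 • (D * D)) +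
      Matrix.fromBlocks (A * Aᴴ - ((g ^ 2 : ℝ) : ℂ) • 1) 0 0
        (Aᴴ * A - ((g ^ 2 : ℝ) : ℂ) • 1) +
      Matrix.fromBlocks (((κ * ‖C‖ : ℝ) : ℂ) • 1) ((κ : ℂ) • C)
        ((κ : ℂ) • Cᴴ) (((κ * ‖C‖ : ℝ) : ℂ) • 1) := by
    rw [hsq, ← Matrix.fromBlocks_one (l := Fin n) (m := Fin n), Matrix.fromBlocks_smul,
      Matrix.fromBlocks_add, Matrix.fromBlocks_add]
    have : ((κ : ℂ) • Cᴴ) = (κ : ℂ) • Cᴴ := rfl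
    rw [show (Matrix.fromBlocks ((κ:ℂ) ^ 2 • (D * D) + A * Aᴴ) ((κ:ℂ) • C) ((κ:ℂ) • Cᴴ)
        ((κ:ℂ) ^ 2 • (D * D) + Aᴴ * A)) -
        Matrix.fromBlocks ((((g ^ 2 - κ * ‖C‖ : ℝ) : ℂ)) • 1) ((((g ^ 2 - κ * ‖C‖ : ℝ) : ℂ)) • 0)
          ((((g ^ 2 - κ * ‖C‖ : ℝ) : ℂ)) • 0) ((((g ^ 2 - κ * ‖C‖ : ℝ) : ℂ)) • 1)
      = Matrix.fromBlocks
          ((κ:ℂ) ^ 2 • (D * D) + A * Aᴴ - (((g ^ 2 - κ * ‖C‖ : ℝ) : ℂ)) • 1) ((κ:ℂ) • C)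
          ((κ:ℂ) • Cᴴ)
          ((κ:ℂ) ^ 2 • (D * D) + Aᴴ * A - (((g ^ 2 - κ * ‖C‖ : ℝ) : ℂ)) • 1) from by
        rw [sub_eq_add_neg, Matrix.fromBlocks_neg, Matrix.fromBlocks_add,
          Matrix.fromBlocks_inj]
        refine ⟨by abel, by simp, by simp, by abel⟩]
    rw [Matrix.fromBlocks_inj]
    push_cast
    refine ⟨by module, by module, by module, by module⟩
  rw [hdecomp]
  have hDD : ((κ : ℂ) ^ 2 • (D * D)).PosSemidef := by
    have h1 : (D * D).PosSemidef := by
      have := Matrix.posSemidef_conjTranspose_mul_self D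
      rwa [hD.eq] at this
    have h2 : ((κ : ℂ) ^ 2 • (D * D)) = (((κ ^ 2 : ℝ) : ℂ)) • (D * D) := by push_cast; rfl
    rw [h2]
    refine posSemidef_of_re ?_ fun x => ?_
    · show (((κ ^ 2 : ℝ) : ℂ) • (D * D))ᴴ = _
      rw [Matrix.conjTranspose_smul, h1.1.eq, Complex.star_def, Complex.conj_ofReal]
    · rw [Matrix.smul_mulVec, dotProduct_smul]
      have h0 := h1.dotProduct_mulVec_nonneg x
      rw [Complex.le_def] at h0
      simp only [Complex.zero_re, Complex.zero_im] at h0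
      simp only [smul_eq_mul, Complex.mul_re, Complex.ofReal_re, Complex.ofReal_im,
        zero_mul, sub_zero]
      nlinarith [h0.1, sq_nonneg κ]
  have hgap1 : (A * Aᴴ - ((g ^ 2 : ℝ) : ℂ) • 1).PosSemidef := by
    have := posSemidef_gap A hA
    rwa [← hg] at this
  have hgap2 : (Aᴴ * A - ((g ^ 2 : ℝ) : ℂ) • 1).PosSemidef := by
    have := posSemidef_gap Aᴴ (by simpa [Matrix.isUnit_iff_isUnit_det,
      Matrix.det_conjTranspose] using ((Matrix.isUnit_iff_isUnit_det A).mp hA).star)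
    rw [Matrix.conjTranspose_conjTranspose, ← Matrix.conjTranspose_nonsing_inv,
      Matrix.l2_opNorm_conjTranspose, ← hg] at this
    exact this
  have hcorner : (Matrix.fromBlocks (((κ * ‖C‖ : ℝ) : ℂ) • 1) ((κ : ℂ) • C)
      ((κ : ℂ) • Cᴴ) (((κ * ‖C‖ : ℝ) : ℂ) • 1)).PosSemidef := by
    have h1 : ((κ : ℂ) • C)ᴴ = (κ : ℂ) • Cᴴ := by
      rw [Matrix.conjTranspose_smul]
      congr 1
      simp [Complex.star_def, Complex.conj_ofReal]
    rw [← h1]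
    apply posSemidef_corner
    have h2 : ‖(κ : ℂ) • C‖ = κ * ‖C‖ := by
      rw [norm_smul]
      congr 1
      simp [abs_of_pos hκ]
    rw [h2]
  exact ((posSemidef_fromBlocks_diag hDD hDD).add
    (posSemidef_fromBlocks_diag hgap1 hgap2)).add hcorner
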